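/- Let p3, p5, p4, p6 be four points of ℝ² in convex position listed in cyclic order p3, p5, p4, p6, with no three of p2, p3, p4, p5, p6 collinear, and suppose p2 lies in the interior of the triangle conv{p3, p5, p6}. Then the intersection of the triangle conv{p6, p2, p3} with the triangle conv{p4, p5, p6} is exactly the single point {p6}. -/

import Mathlib

noncomputable section

/-- The plane ℝ². -/
abbrev Plane := EuclideanSpace ℝ (Fin 2)

/-- The determinant of two vectors of the plane. -/
def det2 (u v : Plane) : ℝ := u 0 * v 1 - u 1 * v 0

/-- No three of the points `f 0, …, f (n-1)` are collinear. -/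
def NoThreeCollinear {n : ℕ} (f : Fin n → Plane) : Prop :=
  ∀ i j k : Fin n, i ≠ j → i ≠ k → j ≠ k → ¬ Collinear ℝ ({f i, f j, f k} : Set Plane)

/-- The points `f 0, …, f (n-1)` are in convex position: no point of the family lies
in the convex hull of the remaining ones. -/
def ConvexPosition {n : ℕ} (f : Fin n → Plane) : Prop :=
  ∀ i : Fin n, f i ∉ convexHull ℝ (f '' {j | j ≠ i})

/-- The points `f 0, …, f (n-1)` are listed in cyclic order: for every pair of
consecutive points (indices mod `n`), all remaining points of the family lie strictly
on one side of the line through that pair. -/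
def CyclicOrder {n : ℕ} (f : Fin (n + 1) → Plane) : Prop :=
  ∀ i : Fin (n + 1),
    (∀ j, j ≠ i → j ≠ i + 1 → 0 < det2 (f (i + 1) - f i) (f j - f i)) ∨
    (∀ j, j ≠ i → j ≠ i + 1 → det2 (f (i + 1) - f i) (f j - f i) < 0)

lemma sub_apply' (u v : Plane) (i : Fin 2) : (u - v) i = u i - v i := rfl
lemma smul_apply' (r : ℝ) (u : Plane) (i : Fin 2) : (r • u) i = r * u i := rfl
lemma add_apply' (u v : Plane) (i : Fin 2) : (u + v) i = u i + v i := rfl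

lemma collinear_of_det2 (a b c : Plane) (h : det2 (b - a) (c - a) = 0) :
    Collinear ℝ ({a, b, c} : Set Plane) := by
  rcases eq_or_ne b a with hba | hba
  · rw [hba, Set.insert_idem]
    exact collinear_pair ℝ a c
  · rw [collinear_iff_of_mem (Set.mem_insert a _)]
    refine ⟨b - a, fun p hp => ?_⟩
    rcases hp with rfl | rfl | rfl
    · exact ⟨0, by simp⟩
    · exact ⟨1, by simp⟩
    · have hd : (b 0 - a 0) * (p 1 - a 1) - (b 1 - a 1) * (p 0 - a 0) = 0 := by
        simpa [det2, sub_apply'] using h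
      rcases eq_or_ne (b 0 - a 0) 0 with h0 | h0
      · have h1 : b 1 - a 1 ≠ 0 := by
          intro h1
          exact hba (by ext i; fin_cases i <;> simp <;> linarith)
        refine ⟨(p 1 - a 1) / (b 1 - a 1), ?_⟩
        ext i; fin_cases i <;> simp only [vadd_eq_add, add_apply', smul_apply', sub_apply', Fin.zero_eta, Fin.mk_one] <;>
          field_simp <;> nlinarith [hd, h0]
      · refine ⟨(p 0 - a 0) / (b 0 - a 0), ?_⟩
        ext i; fin_cases i <;> simp only [vadd_eq_add, add_apply', smul_apply', sub_apply', Fin.zero_eta, Fin.mk_one] <;>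
          field_simp <;> nlinarith [hd]

lemma inter_eq_of_sep (g : Plane → ℝ) (hlin : IsLinearMap ℝ g)
    (q2 q3 q4 q5 q6 : Plane)
    (h5 : g q5 = g q6) (hg2 : g q2 < g q6) (hg3 : g q3 < g q6) (hg4 : g q6 < g q4) :
    convexHull ℝ ({q6, q2, q3} : Set Plane) ∩ convexHull ℝ ({q4, q5, q6} : Set Plane)
      = {q6} := by
  apply Set.eq_singleton_iff_unique_mem.mpr
  constructor
  · exact ⟨subset_convexHull ℝ _ (by simp), subset_convexHull ℝ _ (by simp)⟩
  · rintro x ⟨hxA, hxB⟩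
    set c := g q6 with hc
    have hA : convexHull ℝ ({q6, q2, q3} : Set Plane) ⊆ {y | g y ≤ c} := by
      apply convexHull_min ?_ (convex_halfSpace_le hlin c)
      rintro y (rfl | rfl | rfl) <;> simp [hg2.le, hg3.le] <;> exact hc.ge
    have hB : convexHull ℝ ({q4, q5, q6} : Set Plane) ⊆ {y | c ≤ g y} := by
      apply convexHull_min ?_ (convex_halfSpace_ge hlin c)
      rintro y (rfl | rfl | rfl) <;> simp [hg4.le, h5.ge, le_refl] <;> exact hc.le
    have hxc : g x = c := le_antisymm (hA hxA) (hB hxB)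
    -- decompose x in hull of {q6, q2, q3}
    rw [show ({q6, q2, q3} : Set Plane) = insert q6 {q2, q3} from rfl,
      convexHull_insert ⟨q2, Set.mem_insert _ _⟩, mem_convexJoin] at hxA
    obtain ⟨a, ha, z, hz, hseg⟩ := hxA
    rw [Set.eq_of_mem_singleton ha] at hseg
    rw [convexHull_pair] at hz
    obtain ⟨s, t, hs, ht, hst, rfl⟩ := hz
    obtain ⟨u, v, hu, hv, huv, rfl⟩ := hseg
    have hgz : g (s • q2 + t • q3) < c := by
      rw [hlin.map_add, hlin.map_smul, hlin.map_smul, smul_eq_mul, smul_eq_mul]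
      rcases eq_or_lt_of_le hs with hs0 | hs0
      · have ht1 : t = 1 := by linarith
        rw [← hs0, ht1]; simpa using hg3
      · have hsc : s * c + t * c = c := by
          have : (s + t) * c = 1 * c := by rw [hst]
          linarith [this, mul_comm s c]
        nlinarith [mul_le_mul_of_nonneg_left hg3.le ht, mul_lt_mul_of_pos_left hg2 hs0,
          mul_add s c c, add_mul s t c]
    have hgx : g (u • q6 + v • (s • q2 + t • q3)) = u * c + v * g (s • q2 + t • q3) := by
      rw [hlin.map_add, hlin.map_smul, hlin.map_smul, smul_eq_mul, smul_eq_mul]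
    have hv0 : v = 0 := by
      by_contra hne
      have hvpos : 0 < v := lt_of_le_of_ne hv (Ne.symm hne)
      have huc : u * c + v * c = c := by
        have h' : (u + v) * c = 1 * c := by rw [huv]
        nlinarith [h']
      nlinarith [mul_lt_mul_of_pos_left hgz hvpos, hxc, hgx, huc]
    have hu1 : u = 1 := by linarith
    rw [hv0, hu1]
    simp

/-- If `p3, p5, p4, p6` are in convex position listed in cyclic order `p3, p5, p4, p6`,
no three of `p2, …, p6` are collinear, and `p2` lies in the interior of the triangle
`p3 p5 p6`, then the triangles `p6 p2 p3` and `p4 p5 p6` intersect exactly at `p6`. -/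
theorem triangle623_inter_triangle456_eq_vertex6
    (p2 p3 p4 p5 p6 : Plane)
    (hcol : NoThreeCollinear ![p2, p3, p4, p5, p6])
    (hconv : ConvexPosition ![p3, p5, p4, p6])
    (hcyc : CyclicOrder ![p3, p5, p4, p6])
    (h2 : p2 ∈ interior (convexHull ℝ ({p3, p5, p6} : Set Plane))) :
    convexHull ℝ ({p6, p2, p3} : Set Plane) ∩ convexHull ℝ ({p4, p5, p6} : Set Plane)
      = {p6} := by
  set g : Plane → ℝ := fun x => det2 (p6 - p5) x with hg
  have hlin : IsLinearMap ℝ g := by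
    constructor
    · intro x y; simp only [hg, det2, add_apply', sub_apply']; ring
    · intro r x; simp only [hg, det2, smul_apply', sub_apply', smul_eq_mul]; ring
  have h56 : g p5 = g p6 := by simp only [hg, det2, sub_apply']; ring
  -- sign data from cyclic order
  have hA3 : g p3 - g p6 = det2 (p5 - p3) (p6 - p3) := by
    simp only [hg, det2, sub_apply']; ring
  have hA4 : g p4 - g p6 = -det2 (p4 - p5) (p6 - p5) := by
    simp only [hg, det2, sub_apply']; ring
  have hEA : det2 (p4 - p5) (p3 - p5) = det2 (p5 - p3) (p4 - p3) := by
    simp only [det2, sub_apply']; ring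
  have hc0 := hcyc 0
  have hc1 := hcyc 1
  have e01 : (![p3,p5,p4,p6] : Fin 4 → Plane) ((0:Fin 4)+1) = p5 := rfl
  have e0 : (![p3,p5,p4,p6] : Fin 4 → Plane) 0 = p3 := rfl
  have e2 : (![p3,p5,p4,p6] : Fin 4 → Plane) 2 = p4 := rfl
  have e3 : (![p3,p5,p4,p6] : Fin 4 → Plane) 3 = p6 := rfl
  have e11 : (![p3,p5,p4,p6] : Fin 4 → Plane) ((1:Fin 4)+1) = p4 := rfl
  have e1 : (![p3,p5,p4,p6] : Fin 4 → Plane) 1 = p5 := rfl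
  -- p2 in hull, decompose
  have hp2 : p2 ∈ convexHull ℝ ({p3, p5, p6} : Set Plane) := interior_subset h2
  rw [show ({p3, p5, p6} : Set Plane) = insert p3 {p5, p6} from rfl,
    convexHull_insert ⟨p5, Set.mem_insert _ _⟩, mem_convexJoin] at hp2
  obtain ⟨a, ha, z, hz, hseg⟩ := hp2
  rw [Set.eq_of_mem_singleton ha] at hseg
  rw [convexHull_pair] at hz
  obtain ⟨s, t, hs, ht, hst, rfl⟩ := hz
  obtain ⟨u, v, hu, hv, huv, hp2eq⟩ := hseg
  have hgp2 : g p2 - g p6 = u * (g p3 - g p6) := by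
    have : g p2 = u * g p3 + v * (s * g p5 + t * g p6) := by
      rw [← hp2eq, hlin.map_add, hlin.map_smul, hlin.map_smul, hlin.map_add,
        hlin.map_smul, hlin.map_smul, smul_eq_mul, smul_eq_mul, smul_eq_mul, smul_eq_mul]
    linear_combination this + (v * s) * h56 + (v * g p6) * hst + (g p6) * huv
  -- p2 not on line p5 p6
  have hne2 : g p2 - g p6 ≠ 0 := by
    intro h0
    have hz : det2 (p5 - p2) (p6 - p2) = 0 := by
      have : g p2 - g p6 = det2 (p5 - p2) (p6 - p2) := by
        simp only [hg, det2, sub_apply']; ring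
      linarith [this, h0]
    exact hcol 0 3 4 (by decide) (by decide) (by decide)
      (collinear_of_det2 p2 p5 p6 hz)
  have hupos : 0 < u := by
    rcases lt_or_eq_of_le hu with h | h
    · exact h
    · exfalso; apply hne2; rw [hgp2, ← h]; ring
  rcases hc0 with h0 | h0 <;> rcases hc1 with h1 | h1
  · -- A > 0, B > 0, C > 0 : g p3 > g p6, g p4 < g p6 → flip sign, use -g
    have hB := h0 3 (by decide) (by decide)
    have hC := h1 3 (by decide) (by decide)
    rw [e01, e0, e3] at hB
    rw [e11, e1, e3] at hC
    have hg3 : g p6 < g p3 := by linarith [hA3, hB]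
    have hg4 : g p4 < g p6 := by linarith [hA4, hC]
    have hg2' : g p6 < g p2 := by
      have := mul_pos hupos (by linarith : (0:ℝ) < g p3 - g p6)
      linarith
    have hlinneg : IsLinearMap ℝ (fun x => -g x) := by
      constructor
      · intro x y; rw [hlin.map_add]; ring
      · intro r x; rw [hlin.map_smul, smul_eq_mul, smul_eq_mul]; ring
    exact inter_eq_of_sep (fun x => -g x) hlinneg p2 p3 p4 p5 p6
      (by simp [h56]) (by simp [hg2']) (by simp [hg3]) (by simp [hg4])
  · -- A > 0 but E < 0 = A : contradiction
    exfalso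
    have hA := h0 2 (by decide) (by decide)
    have hE := h1 0 (by decide) (by decide)
    rw [e01, e0, e2] at hA
    rw [e11, e1, e0] at hE
    rw [hEA] at hE
    linarith
  · exfalso
    have hA := h0 2 (by decide) (by decide)
    have hE := h1 0 (by decide) (by decide)
    rw [e01, e0, e2] at hA
    rw [e11, e1, e0] at hE
    rw [hEA] at hE
    linarith
  · -- B < 0, C < 0 : g p3 < g p6, g p4 > g p6, use g
    have hB := h0 3 (by decide) (by decide)
    have hC := h1 3 (by decide) (by decide)
    rw [e01, e0, e3] at hB
    rw [e11, e1, e3] at hC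
    have hg3 : g p3 < g p6 := by linarith [hA3, hB]
    have hg4 : g p6 < g p4 := by linarith [hA4, hC]
    have hg2' : g p2 < g p6 := by
      have := mul_neg_of_pos_of_neg hupos (by linarith : g p3 - g p6 < 0)
      linarith
    exact inter_eq_of_sep g hlin p2 p3 p4 p5 p6 h56 hg2' hg3 hg4
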